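/- If L_i(v) = L_j(v') (both defined, i.e., equal to some physical address), then Virt2Mask(v) = Virt2Mask(v'), where Virt2Mask(x) = ((x - vstart) mod len) + vstart. That is, functional equivalence of addresses under two Oreo layouts implies equality of their masked addresses. -/
import Mathlib


def Layout (vstart pstart len i v : ℕ) : Option ℕ :=
  if vstart + i * len ≤ v ∧ v < vstart + (i + 1) * len then
    some (pstart + (v - (vstart + i * len)))
  else none

def Virt2Mask (vstart len x : ℕ) : ℕ := ((x - vstart) % len) + vstart

theorem layout_eq_implies_mask_eq (vstart pstart len N : ℕ) (hlen : 0 < len)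
    (i j : ℕ) (hi : i < N) (hj : j < N) (v v' p : ℕ)
    (h : Layout vstart pstart len i v = some p ∧
         Layout vstart pstart len j v' = some p) :
    Virt2Mask vstart len v = Virt2Mask vstart len v' := by
  obtain ⟨h1, h2⟩ := h
  unfold Layout at h1 h2
  split_ifs at h1 h2 with hc1 hc2
  obtain ⟨hl1, hr1⟩ := hc1
  obtain ⟨hl2, hr2⟩ := hc2
  injection h1 with h1
  injection h2 with h2
  set r := v - (vstart + i * len) with hr
  set r' := v' - (vstart + j * len) with hr'
  have hrr' : r = r' := by omega
  have hrlt : r < len := by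
    rw [add_mul, one_mul] at hr1; omega
  have hrlt' : r' < len := hrr' ▸ hrlt
  have hv : v - vstart = i * len + r := by omega
  have hv' : v' - vstart = j * len + r' := by omega
  unfold Virt2Mask
  rw [hv, hv', mul_comm, mul_comm j, Nat.mul_add_mod,
    Nat.mul_add_mod, Nat.mod_eq_of_lt hrlt, Nat.mod_eq_of_lt hrlt', hrr']
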